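/- The sequence (α_n) converges to 1/4 as n → ∞. -/

import Mathlib

open Finset

/-- `S δ i = δ 1 + ⋯ + δ i`. -/
noncomputable def S (δ : ℕ → ℝ) (i : ℕ) : ℝ := ∑ k ∈ Finset.Icc 1 i, δ k

/-- `max {δ 1 / S 2, …, δ (n-1) / S n, δ n / S n}`.  For `i ≤ n - 1` we have
`min (i+1) n = i+1`, while for `i = n` we get `δ n / S n`. -/
noncomputable def maxRatio (n : ℕ) (δ : ℕ → ℝ) : ℝ :=
  (insert n (Finset.Icc 1 n)).sup' (Finset.insert_nonempty _ _)
    (fun i => δ i / S δ (min (i + 1) n))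

/-- `α n` is the infimum over positive vectors `δ` of the above maximum. -/
noncomputable def alpha (n : ℕ) : ℝ :=
  sInf {r : ℝ | ∃ δ : ℕ → ℝ, (∀ i ∈ Finset.Icc 1 n, 0 < δ i) ∧ r = maxRatio n δ}

open Real Filter

private lemma trig_key (x t : ℝ) :
    Real.sin (x + t + t) = 2 * Real.sin (x + t) * Real.cos t - Real.sin x := by
  have h2 : Real.sin x = Real.sin ((x + t) - t) := by norm_num
  rw [show x + t + t = (x + t) + t from rfl, Real.sin_add, h2, Real.sin_sub]
  ring

lemma maxRatio_ge (n : ℕ) (hn : 2 ≤ n) (δ : ℕ → ℝ)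
    (hδ : ∀ i ∈ Finset.Icc 1 n, 0 < δ i) : 1/4 ≤ maxRatio n δ := by
  by_contra hcon
  push_neg at hcon
  set r := maxRatio n δ with hr
  have hSpos : ∀ i, 1 ≤ i → i ≤ n → 0 < S δ i := by
    intro i h1 h2
    apply Finset.sum_pos
    · intro k hk
      rw [Finset.mem_Icc] at hk
      exact hδ k (Finset.mem_Icc.mpr ⟨hk.1, le_trans hk.2 h2⟩)
    · exact Finset.nonempty_Icc.mpr h1
  have hterm : ∀ i ∈ insert n (Finset.Icc 1 n), δ i / S δ (min (i+1) n) ≤ r :=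
    fun i hi => Finset.le_sup' (fun i => δ i / S δ (min (i+1) n)) hi
  have hb : ∀ i, 1 ≤ i → i ≤ n → δ i ≤ r * S δ (min (i+1) n) := by
    intro i h1 h2
    have hmem : i ∈ insert n (Finset.Icc 1 n) :=
      Finset.mem_insert_of_mem (Finset.mem_Icc.mpr ⟨h1, h2⟩)
    have hSp : 0 < S δ (min (i+1) n) := hSpos _ (by omega) (by omega)
    have := hterm i hmem
    rw [div_le_iff₀ hSp] at this
    linarith
  have hstep : ∀ i : ℕ, S δ (i+1) = S δ i + δ (i+1) := by
    intro i
    unfold S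
    rw [Finset.sum_Icc_succ_top (by omega : 1 ≤ i+1)]
  have key : ∀ m j, 1 ≤ j → j + m = n - 1 → S δ (j+1) < 2 * S δ j := by
    intro m
    induction m with
    | zero =>
      intro j hj1 hj2
      have hj : j = n - 1 := by omega
      subst hj
      have hn1 : n - 1 + 1 = n := by omega
      have h1 := hb n (by omega) le_rfl
      rw [min_eq_right (by omega : n ≤ n + 1)] at h1
      have h2 := hstep (n-1)
      rw [hn1] at h2
      have hp1 := hSpos n (by omega) le_rfl
      rw [hn1]
      have hpn1 := hSpos (n-1) (by omega) (by omega)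
      nlinarith [mul_pos (by linarith : (0:ℝ) < 1/4 - r) hp1]
    | succ m ih =>
      intro j hj1 hj2
      have ihe := ih (j+1) (by omega) (by omega)
      have h1 := hb (j+1) (by omega) (by omega)
      rw [min_eq_left (by omega : j+1+1 ≤ n)] at h1
      have h2 := hstep j
      have hp1 := hSpos (j+1) (by omega) (by omega)
      have hp2 := hSpos (j+2) (by omega) (by omega)
      nlinarith [mul_pos (by linarith : (0:ℝ) < 1/4 - r) hp2]
  have k1 := key (n-2) 1 le_rfl (by omega)
  have h1 := hb 1 le_rfl (by omega)
  rw [min_eq_left (by omega : 1+1 ≤ n)] at h1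
  have hS1 : S δ 1 = δ 1 := by unfold S; simp
  have hp1 := hSpos 1 le_rfl (by omega)
  have hp2 := hSpos 2 (by omega) (by omega)
  nlinarith [mul_pos (by linarith : (0:ℝ) < 1/4 - r) hp2]

lemma alpha_le (n : ℕ) (hn : 2 ≤ n) :
    alpha n ≤ 1 / (4 * Real.cos (Real.pi / (n + 2)) ^ 2) := by
  set θ : ℝ := Real.pi / (n + 2) with hθdef
  have hn2 : (0:ℝ) < (n:ℝ) + 2 := by positivity
  have hcast : (2:ℝ) ≤ (n:ℝ) := by exact_mod_cast hn
  have hθpos : 0 < θ := by rw [hθdef]; positivity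
  have hθlt : θ < Real.pi / 2 := by
    rw [hθdef]
    exact div_lt_div_of_pos_left Real.pi_pos (by norm_num) (by linarith)
  have hc : 0 < Real.cos θ :=
    Real.cos_pos_of_mem_Ioo ⟨by linarith [Real.pi_pos], hθlt⟩
  set c := Real.cos θ with hcdef
  set r : ℝ := 1 / (4 * c^2) with hrdef
  have hrpos : 0 < r := by
    rw [hrdef]
    apply div_pos one_pos
    positivity
  set T : ℕ → ℝ := fun i => (2*c)^i * Real.sin (i * θ) with hTdef
  set δ' : ℕ → ℝ := fun i => T i - T (i-1) with hδ'def
  have hsin : ∀ k : ℕ, 1 ≤ k → k ≤ n+1 → 0 < Real.sin (k * θ) := by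
    intro k h1 h2
    apply Real.sin_pos_of_pos_of_lt_pi
    · have : (1:ℝ) ≤ (k:ℝ) := by exact_mod_cast h1
      nlinarith
    · have hk : (k:ℝ) < (n:ℝ) + 2 := by exact_mod_cast (by omega : k < n+2)
      calc (k:ℝ)*θ < ((n:ℝ)+2)*θ := mul_lt_mul_of_pos_right hk hθpos
        _ = Real.pi := by rw [hθdef]; field_simp
  have hTpos : ∀ k, 1 ≤ k → k ≤ n+1 → 0 < T k := by
    intro k h1 h2
    exact mul_pos (pow_pos (by linarith) k) (hsin k h1 h2)
  have hT0 : T 0 = 0 := by simp [hTdef]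
  have hST : ∀ i, S δ' i = T i := by
    intro i
    induction i with
    | zero => simp [S, hT0]
    | succ i ih =>
      unfold S at ih ⊢
      rw [Finset.sum_Icc_succ_top (by omega : 1 ≤ i+1), ih]
      simp only [hδ'def, Nat.add_sub_cancel]
      ring
  have hδe : ∀ j : ℕ, δ' (j+1) = r * T (j+2) := by
    intro j
    have key : Real.sin ((j:ℝ)*θ + θ + θ) = 2 * Real.sin ((j:ℝ)*θ + θ) * c - Real.sin ((j:ℝ)*θ) :=
      trig_key _ _
    simp only [hδ'def, hTdef, Nat.add_sub_cancel]
    have e1 : ((j+1:ℕ):ℝ) * θ = (j:ℝ)*θ + θ := by push_cast; ring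
    have e2 : ((j+2:ℕ):ℝ) * θ = (j:ℝ)*θ + θ + θ := by push_cast; ring
    rw [e1, e2, key, hrdef]
    have hcne : c ≠ 0 := ne_of_gt hc
    field_simp
    ring
  have hTn : T (n+1) = T n := by
    have e1 : ((n+1:ℕ):ℝ)*θ = Real.pi - θ := by
      rw [hθdef]; push_cast; field_simp; ring
    have e2 : ((n:ℕ):ℝ)*θ = Real.pi - (θ + θ) := by
      rw [hθdef]; push_cast; field_simp; ring
    simp only [hTdef]
    rw [e1, e2, Real.sin_pi_sub, Real.sin_pi_sub,
      show θ + θ = 2*θ by ring, Real.sin_two_mul, pow_succ]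
    rw [← hcdef]
    ring
  have hpos : ∀ i ∈ Finset.Icc 1 n, 0 < δ' i := by
    intro i hi
    rw [Finset.mem_Icc] at hi
    obtain ⟨j, rfl⟩ : ∃ j, i = j + 1 := ⟨i-1, by omega⟩
    rw [hδe j]
    exact mul_pos hrpos (hTpos (j+2) (by omega) (by omega))
  have hval : ∀ i ∈ insert n (Finset.Icc 1 n), δ' i / S δ' (min (i+1) n) = r := by
    intro i hi
    have hi1 : 1 ≤ i := by
      rcases Finset.mem_insert.mp hi with h | h
      · omega
      · exact (Finset.mem_Icc.mp h).1
    have hi2 : i ≤ n := by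
      rcases Finset.mem_insert.mp hi with h | h
      · omega
      · exact (Finset.mem_Icc.mp h).2
    by_cases hin : i = n
    · subst hin
      rw [min_eq_right (by omega : i ≤ i + 1), hST]
      have hd : δ' i = r * T i := by
        obtain ⟨j, rfl⟩ : ∃ j, i = j + 1 := ⟨i-1, by omega⟩
        rw [hδe j, show j + 1 + 1 = (j+1) + 1 from rfl, hTn]
      rw [hd, mul_div_assoc, div_self (ne_of_gt (hTpos i hi1 (by omega))), mul_one]
    · rw [min_eq_left (by omega : i + 1 ≤ n), hST]
      obtain ⟨j, rfl⟩ : ∃ j, i = j + 1 := ⟨i-1, by omega⟩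
      rw [hδe j]
      rw [mul_div_assoc, div_self (ne_of_gt (hTpos (j+2) (by omega) (by omega))), mul_one]
  have hmax : maxRatio n δ' = r := by
    unfold maxRatio
    apply le_antisymm
    · exact Finset.sup'_le _ _ fun i hi => (hval i hi).le
    · exact (hval n (Finset.mem_insert_self _ _)).ge.trans
        (Finset.le_sup' (fun i => δ' i / S δ' (min (i+1) n)) (Finset.mem_insert_self _ _))
  have hmem : r ∈ {x : ℝ | ∃ δ : ℕ → ℝ, (∀ i ∈ Finset.Icc 1 n, 0 < δ i) ∧ x = maxRatio n δ} :=
    ⟨δ', hpos, hmax.symm⟩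
  have hbdd : BddBelow {x : ℝ | ∃ δ : ℕ → ℝ, (∀ i ∈ Finset.Icc 1 n, 0 < δ i) ∧ x = maxRatio n δ} := by
    refine ⟨1/4, ?_⟩
    rintro x ⟨d, hd, rfl⟩
    exact maxRatio_ge n hn d hd
  exact csInf_le hbdd hmem

theorem alpha_tendsto_one_quarter :
    Filter.Tendsto (fun n : ℕ => alpha n) Filter.atTop (nhds (1 / 4)) := by
  have hupper : Tendsto (fun n : ℕ => 1 / (4 * Real.cos (Real.pi / (n + 2)) ^ 2)) atTop
      (nhds (1/4)) := by
    have h0 : Tendsto (fun n : ℕ => Real.pi / ((n:ℝ) + 2)) atTop (nhds 0) := by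
      apply Tendsto.div_atTop tendsto_const_nhds
      exact tendsto_atTop_add_const_right _ 2 tendsto_natCast_atTop_atTop
    have h1 : Tendsto (fun n : ℕ => Real.cos (Real.pi / ((n:ℝ)+2))) atTop (nhds 1) := by
      have := (Real.continuous_cos.tendsto 0).comp h0
      simpa [Function.comp_def] using this
    have h2 : Tendsto (fun n : ℕ => 4 * Real.cos (Real.pi / ((n:ℝ)+2))^2) atTop (nhds 4) := by
      have := (h1.pow 2).const_mul (4:ℝ)
      simpa using this
    have hone : Tendsto (fun _ : ℕ => (1:ℝ)) atTop (nhds 1) := tendsto_const_nhds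
    exact hone.div h2 (by norm_num)
  apply tendsto_of_tendsto_of_tendsto_of_le_of_le' tendsto_const_nhds hupper
  · filter_upwards [eventually_ge_atTop 2] with n hn
    apply le_csInf
    · exact ⟨maxRatio n (fun _ => 1), fun _ => 1, fun i _ => one_pos, rfl⟩
    · rintro x ⟨d, hd, rfl⟩
      exact maxRatio_ge n hn d hd
  · filter_upwards [eventually_ge_atTop 2] with n hn
    exact alpha_le n hn
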